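/- arXiv:1809.10200 — 3 statements merged into one kernel-verified Lean document; each statement's English description precedes it below -/
import Mathlib

section
/- Let f ∈ L²(ℝ², ℂ), let g : ℝ² → ℂ be measurable with |g(ω)| ≤ 1 for all ω, let ω₀, a ∈ ℝ², η₀ > 0 and ε ≥ 0, and assume |g(ω)| ≤ ε whenever ‖ω − ω₀‖ > η₀. Then ∫_{ℝ²} |(e^{−i⟨ω,a⟩} − e^{−i⟨ω₀,a⟩}) · g(ω) · f(ω)|² dω ≤ (4ε² + η₀²‖a‖²) · ‖f‖₂². -/
open MeasureTheory Complex
open scoped RealInnerProductSpace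

/-- The plane ℝ². -/
local notation "ℝ²" => EuclideanSpace ℝ (Fin 2)

lemma aux_norm_exp_sub (x y : ℝ) :
    ‖Complex.exp (-(Complex.I * (x:ℝ))) - Complex.exp (-(Complex.I * (y:ℝ)))‖ ≤ |x - y| := by
  have hx : -(Complex.I * (x:ℝ)) = ((-x : ℝ) : ℂ) * Complex.I := by push_cast; ring
  have hy : -(Complex.I * (y:ℝ)) = ((-y : ℝ) : ℂ) * Complex.I := by push_cast; ring
  rw [hx, hy]
  have hsq : ‖Complex.exp (((-x : ℝ) : ℂ) * Complex.I) -
      Complex.exp (((-y : ℝ) : ℂ) * Complex.I)‖ ^ 2 ≤ |x - y| ^ 2 := by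
    rw [Complex.exp_mul_I, Complex.exp_mul_I]
    rw [← Complex.ofReal_cos, ← Complex.ofReal_sin, ← Complex.ofReal_cos, ← Complex.ofReal_sin]
    have : (↑(Real.cos (-x)) + ↑(Real.sin (-x)) * Complex.I) -
        (↑(Real.cos (-y)) + ↑(Real.sin (-y)) * Complex.I)
        = ↑(Real.cos (-x) - Real.cos (-y)) + ↑(Real.sin (-x) - Real.sin (-y)) * Complex.I := by
      push_cast; ring
    rw [this, Complex.sq_norm, Complex.normSq_add_mul_I]
    have h1 := Real.sin_sq_add_cos_sq (-x)
    have h2 := Real.sin_sq_add_cos_sq (-y)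
    have h3 := Real.cos_sub (-x) (-y)
    have h4 := Real.one_sub_sq_div_two_le_cos (x := -x - -y)
    have h5 : |x - y| ^ 2 = (x - y) ^ 2 := sq_abs _
    nlinarith [h4]
  have h0 : (0:ℝ) ≤ |x - y| := abs_nonneg _
  nlinarith [norm_nonneg (Complex.exp (((-x : ℝ) : ℂ) * Complex.I) -
      Complex.exp (((-y : ℝ) : ℂ) * Complex.I))]

/-- Fourier-side inequality at the core of Proposition 1: for `f ∈ L²(ℝ², ℂ)`,
`g` measurable with `|g| ≤ 1` everywhere and `|g(ω)| ≤ ε` for `‖ω - ω₀‖ > η₀`, one has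
`∫ |(e^{-i⟨ω,a⟩} - e^{-i⟨ω₀,a⟩}) g(ω) f(ω)|² dω ≤ (4ε² + η₀²‖a‖²) ‖f‖₂²`. -/
theorem stmt0 (f g : ℝ² → ℂ) (hf : MemLp f 2 (volume : Measure ℝ²))
    (hg : Measurable g) (hg1 : ∀ ω, ‖g ω‖ ≤ 1)
    (ω₀ a : ℝ²) (η₀ ε : ℝ) (hη₀ : 0 < η₀) (hε : 0 ≤ ε)
    (htail : ∀ ω : ℝ², η₀ < ‖ω - ω₀‖ → ‖g ω‖ ≤ ε) :
    ∫ ω : ℝ², ‖(Complex.exp (-(Complex.I * (⟪ω, a⟫ : ℝ))) -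
        Complex.exp (-(Complex.I * (⟪ω₀, a⟫ : ℝ)))) * g ω * f ω‖ ^ 2
      ≤ (4 * ε ^ 2 + η₀ ^ 2 * ‖a‖ ^ 2) * ∫ ω : ℝ², ‖f ω‖ ^ 2 := by
  have hexp1 : ∀ r : ℝ, ‖Complex.exp (-(Complex.I * (r:ℝ)))‖ = 1 := by
    intro r
    rw [Complex.norm_exp]
    simp
  have hpt : ∀ ω : ℝ², ‖(Complex.exp (-(Complex.I * (⟪ω, a⟫ : ℝ))) -
      Complex.exp (-(Complex.I * (⟪ω₀, a⟫ : ℝ)))) * g ω * f ω‖ ^ 2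
      ≤ (4 * ε ^ 2 + η₀ ^ 2 * ‖a‖ ^ 2) * ‖f ω‖ ^ 2 := by
    intro ω
    rw [norm_mul, norm_mul, mul_pow, mul_pow]
    set E := ‖Complex.exp (-(Complex.I * (⟪ω, a⟫ : ℝ))) -
        Complex.exp (-(Complex.I * (⟪ω₀, a⟫ : ℝ)))‖ with hE
    have hE0 : 0 ≤ E := norm_nonneg _
    have hg0 : 0 ≤ ‖g ω‖ := norm_nonneg _
    rcases le_or_gt ‖ω - ω₀‖ η₀ with h | h
    · have h1 : E ≤ η₀ * ‖a‖ := by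
        calc E ≤ |(⟪ω, a⟫ : ℝ) - (⟪ω₀, a⟫ : ℝ)| := aux_norm_exp_sub _ _
          _ = |(⟪ω - ω₀, a⟫ : ℝ)| := by rw [inner_sub_left]
          _ ≤ ‖ω - ω₀‖ * ‖a‖ := abs_real_inner_le_norm _ _
          _ ≤ η₀ * ‖a‖ := mul_le_mul_of_nonneg_right h (norm_nonneg a)
      have key : E ^ 2 * ‖g ω‖ ^ 2 ≤ η₀ ^ 2 * ‖a‖ ^ 2 := by
        have h2 : E * ‖g ω‖ ≤ η₀ * ‖a‖ * 1 :=
          mul_le_mul h1 (hg1 ω) hg0 (by positivity)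
        nlinarith [mul_nonneg hE0 hg0]
      have := mul_le_mul_of_nonneg_right key (sq_nonneg ‖f ω‖)
      nlinarith [mul_nonneg (mul_nonneg (by norm_num : (0:ℝ) ≤ 4) (sq_nonneg ε)) (sq_nonneg ‖f ω‖)]
    · have h1 : E ≤ 2 := by
        calc E ≤ ‖Complex.exp (-(Complex.I * ((⟪ω, a⟫:ℝ):ℂ)))‖ +
            ‖Complex.exp (-(Complex.I * ((⟪ω₀, a⟫:ℝ):ℂ)))‖ := norm_sub_le _ _
          _ = 2 := by rw [hexp1, hexp1]; norm_num
      have h2 : ‖g ω‖ ≤ ε := htail ω h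
      have key : E ^ 2 * ‖g ω‖ ^ 2 ≤ 4 * ε ^ 2 := by
        have h3 : E * ‖g ω‖ ≤ 2 * ε := mul_le_mul h1 h2 hg0 (by norm_num)
        nlinarith [mul_nonneg hE0 hg0]
      have := mul_le_mul_of_nonneg_right key (sq_nonneg ‖f ω‖)
      nlinarith [mul_nonneg (mul_nonneg (sq_nonneg η₀) (sq_nonneg ‖a‖)) (sq_nonneg ‖f ω‖)]
  have hint : Integrable (fun ω : ℝ² => ‖f ω‖ ^ 2) volume := by
    have h := hf.integrable_norm_rpow (by norm_num) (by norm_num)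
    simpa [Real.rpow_natCast] using h
  calc ∫ ω : ℝ², ‖(Complex.exp (-(Complex.I * (⟪ω, a⟫ : ℝ))) -
        Complex.exp (-(Complex.I * (⟪ω₀, a⟫ : ℝ)))) * g ω * f ω‖ ^ 2
      ≤ ∫ ω : ℝ², (4 * ε ^ 2 + η₀ ^ 2 * ‖a‖ ^ 2) * ‖f ω‖ ^ 2 :=
        integral_mono_of_nonneg (Filter.Eventually.of_forall fun ω => by positivity)
          (hint.const_mul _) (Filter.Eventually.of_forall hpt)
    _ = (4 * ε ^ 2 + η₀ ^ 2 * ‖a‖ ^ 2) * ∫ ω : ℝ², ‖f ω‖ ^ 2 := integral_const_mul _ _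
end

section
/- Let Σ be a real symmetric positive semidefinite 2×2 matrix, Γ an invertible real 2×2 matrix and b ∈ ℝ². Set M := Σ + ΓᵀΓ, b̃ := M⁻¹Γᵀb and c₀ := ‖b‖² − b̃ᵀM b̃ ≥ 0. Define Δ as the inverse Fourier transform of ω ↦ exp(−ωᵀΣω − ‖Γω − b‖²) and h as the inverse Fourier transform of ω ↦ exp(−ωᵀΣω − ‖Γω‖²) (both functions are integrable since M is positive definite). Then h(u) > 0 for every u ∈ ℝ², and |Δ(u)| = e^{−c₀} · h(u) for every u ∈ ℝ². -/
open Matrix MeasureTheory Complex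
open scoped Real

/-- Inverse Fourier transform on ℝ² with the convention
`g^∨(u) = (2π)^{-2} ∫ g(ω) e^{i⟨u,ω⟩} dω`, where `⟨u,ω⟩ = u ⬝ᵥ ω` is the Euclidean
inner product. -/
noncomputable def invFourier (g : (Fin 2 → ℝ) → ℂ) (u : Fin 2 → ℝ) : ℂ :=
  (((2 * π) ^ 2 : ℝ)⁻¹ : ℂ) * ∫ ω : Fin 2 → ℝ, g ω * Complex.exp (Complex.I * ((u ⬝ᵥ ω : ℝ) : ℂ))

lemma dot_self_nonneg' (x : Fin 2 → ℝ) : 0 ≤ x ⬝ᵥ x :=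
  Finset.sum_nonneg fun _ _ => mul_self_nonneg _

open scoped MatrixOrder in
/-- The Gaussian integral with positive definite quadratic form and imaginary linear term
is a positive real number. -/
lemma gauss_aux (M : Matrix (Fin 2) (Fin 2) ℝ) (hM : M.PosDef) (u : Fin 2 → ℝ) :
    ∃ r : ℝ, 0 < r ∧
      (∫ ω : Fin 2 → ℝ,
        Complex.exp (-((ω ⬝ᵥ (M *ᵥ ω) : ℝ) : ℂ) + Complex.I * ((u ⬝ᵥ ω : ℝ) : ℂ))) = (r : ℂ) := by
  classical
  obtain ⟨A, hAA, hAH⟩ : ∃ A : Matrix (Fin 2) (Fin 2) ℝ, A * A = M ∧ Aᵀ = A := by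
    refine ⟨CFC.sqrt M, CFC.sqrt_mul_sqrt_self M (Matrix.nonneg_iff_posSemidef.2 hM.posSemidef), ?_⟩
    have h : (CFC.sqrt M)ᴴ = CFC.sqrt M := (Matrix.nonneg_iff_posSemidef.1 (CFC.sqrt_nonneg M)).1
    ext i j
    have := congrFun (congrFun h i) j
    simpa [Matrix.conjTranspose_apply, Matrix.transpose_apply] using this
  have hdetM : 0 < M.det := hM.det_pos
  have hdetA : A.det ≠ 0 := by
    intro h0
    rw [← hAA, Matrix.det_mul, h0, mul_zero] at hdetM
    exact lt_irrefl _ hdetM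
  have hunit : IsUnit A.det := isUnit_iff_ne_zero.2 hdetA
  have hvm : ∀ x : Fin 2 → ℝ, x ᵥ* A = A *ᵥ x := by
    intro x
    rw [← Matrix.vecMul_transpose A x, hAH]
  obtain ⟨w, hAw⟩ : ∃ w : Fin 2 → ℝ, A *ᵥ w = u := by
    refine ⟨A⁻¹ *ᵥ u, ?_⟩
    rw [Matrix.mulVec_mulVec, Matrix.mul_nonsing_inv _ hunit, Matrix.one_mulVec]
  have h1 : ∀ ω : Fin 2 → ℝ, ω ⬝ᵥ (M *ᵥ ω) = (A *ᵥ ω) ⬝ᵥ (A *ᵥ ω) := by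
    intro ω
    rw [← hAA, ← Matrix.mulVec_mulVec, Matrix.dotProduct_mulVec, hvm]
  have h2 : ∀ ω : Fin 2 → ℝ, u ⬝ᵥ ω = w ⬝ᵥ (A *ᵥ ω) := by
    intro ω
    rw [Matrix.dotProduct_mulVec, hvm, hAw]
  have hφm : Measurable (⇑(Matrix.toLin' A)) := (LinearMap.continuous_on_pi _).measurable
  have hmap : Measure.map (⇑(Matrix.toLin' A)) volume = ENNReal.ofReal |A.det⁻¹| • volume :=
    Real.map_matrix_volume_pi_eq_smul_volume_pi hdetA
  obtain ⟨g, hg⟩ : ∃ g : (Fin 2 → ℝ) → ℂ,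
      g = fun v => Complex.exp (-((v ⬝ᵥ v : ℝ) : ℂ) + Complex.I * ((w ⬝ᵥ v : ℝ) : ℂ)) :=
    ⟨_, rfl⟩
  have hc1 : Continuous fun v : Fin 2 → ℝ => v ⬝ᵥ v := by
    simp only [dotProduct]
    exact continuous_finset_sum _ fun i _ => (continuous_apply i).mul (continuous_apply i)
  have hc2 : Continuous fun v : Fin 2 → ℝ => w ⬝ᵥ v := by
    simp only [dotProduct]
    exact continuous_finset_sum _ fun i _ => continuous_const.mul (continuous_apply i)
  have hgcont : Continuous g := by
    rw [hg]
    exact Complex.continuous_exp.comp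
      (((Complex.continuous_ofReal.comp hc1).neg).add
        (continuous_const.mul (Complex.continuous_ofReal.comp hc2)))
  have hgval : (∫ v : Fin 2 → ℝ, g v)
      = (π : ℂ) * Complex.exp (-(((w ⬝ᵥ w : ℝ) : ℂ)) / 4) := by
    have key := GaussianFourier.integral_cexp_neg_mul_sum_add (b := 1) (ι := Fin 2)
      (by norm_num) (fun i => Complex.I * (w i : ℂ))
    have hL : (∫ v : Fin 2 → ℝ, g v)
        = ∫ v : Fin 2 → ℝ,
            Complex.exp (-(1:ℂ) * ∑ i, (v i : ℂ) ^ 2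
              + ∑ i, (Complex.I * (w i : ℂ)) * (v i : ℂ)) := by
      have hfun : (fun v : Fin 2 → ℝ =>
          Complex.exp (-((v ⬝ᵥ v : ℝ) : ℂ) + Complex.I * ((w ⬝ᵥ v : ℝ) : ℂ)))
          = fun v : Fin 2 → ℝ =>
            Complex.exp (-(1:ℂ) * ∑ i, (v i : ℂ) ^ 2
              + ∑ i, (Complex.I * (w i : ℂ)) * (v i : ℂ)) := by
        funext v
        congr 1
        simp only [dotProduct, Fin.sum_univ_two]
        push_cast
        ring
      rw [hg, hfun]
    rw [hL, key]
    have hs : (∑ i, (Complex.I * (w i : ℂ)) ^ 2) = -(((w ⬝ᵥ w : ℝ) : ℂ)) := by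
      simp only [dotProduct, Fin.sum_univ_two, mul_pow, Complex.I_sq]
      push_cast
      ring
    rw [hs]
    norm_num [Complex.cpow_one]
  have hint : (∫ ω : Fin 2 → ℝ,
        Complex.exp (-((ω ⬝ᵥ (M *ᵥ ω) : ℝ) : ℂ) + Complex.I * ((u ⬝ᵥ ω : ℝ) : ℂ)))
      = (|A.det⁻¹| : ℝ) • ∫ v : Fin 2 → ℝ, g v := by
    have e1 : (∫ ω : Fin 2 → ℝ,
          Complex.exp (-((ω ⬝ᵥ (M *ᵥ ω) : ℝ) : ℂ) + Complex.I * ((u ⬝ᵥ ω : ℝ) : ℂ)))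
        = ∫ ω : Fin 2 → ℝ, g ((Matrix.toLin' A) ω) := by
      have hfun : (fun ω : Fin 2 → ℝ =>
          Complex.exp (-((ω ⬝ᵥ (M *ᵥ ω) : ℝ) : ℂ) + Complex.I * ((u ⬝ᵥ ω : ℝ) : ℂ)))
          = fun ω : Fin 2 → ℝ =>
            Complex.exp (-(((A *ᵥ ω) ⬝ᵥ (A *ᵥ ω) : ℝ) : ℂ)
              + Complex.I * ((w ⬝ᵥ (A *ᵥ ω) : ℝ) : ℂ)) := by
        funext ω
        rw [h1 ω, h2 ω]
      rw [hg]
      simp only [Matrix.toLin'_apply]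
      rw [hfun]
    rw [e1, ← MeasureTheory.integral_map hφm.aemeasurable hgcont.aestronglyMeasurable, hmap,
      integral_smul_measure, ENNReal.toReal_ofReal (abs_nonneg _)]
  refine ⟨|A.det⁻¹| * (π * Real.exp (-(w ⬝ᵥ w) / 4)), ?_, ?_⟩
  · have : A.det⁻¹ ≠ 0 := inv_ne_zero hdetA
    have h0 : 0 < |A.det⁻¹| := abs_pos.2 this
    positivity
  · rw [hint, hgval]
    rw [Complex.real_smul]
    push_cast
    ring

/-- For `S` symmetric positive semidefinite, `Γ` invertible and `b ∈ ℝ²`,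
set `M := S + ΓᵀΓ`, `b̃ := M⁻¹Γᵀb`, `c₀ := ‖b‖² - b̃ᵀMb̃`. Let `Δ` be the inverse Fourier
transform of `ω ↦ exp(-ωᵀSω - ‖Γω - b‖²)` and `h` that of `ω ↦ exp(-ωᵀSω - ‖Γω‖²)`.
Then `c₀ ≥ 0`, `h(u) > 0` for every `u`, and `|Δ(u)| = e^{-c₀} h(u)` for every `u`. -/
theorem stmt11 (S Γ : Matrix (Fin 2) (Fin 2) ℝ)
    (hS : S.IsSymm) (hS' : S.PosSemidef) (hΓ : IsUnit Γ) (b : Fin 2 → ℝ)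
    (M : Matrix (Fin 2) (Fin 2) ℝ) (hM : M = S + Γᵀ * Γ)
    (btil : Fin 2 → ℝ) (hbtil : btil = M⁻¹ *ᵥ (Γᵀ *ᵥ b))
    (c₀ : ℝ) (hc₀ : c₀ = b ⬝ᵥ b - btil ⬝ᵥ (M *ᵥ btil))
    (Δ h : (Fin 2 → ℝ) → ℂ)
    (hΔ : Δ = invFourier (fun ω =>
      Complex.exp (-(((ω ⬝ᵥ (S *ᵥ ω) + (Γ *ᵥ ω - b) ⬝ᵥ (Γ *ᵥ ω - b) : ℝ)) : ℂ))))
    (hh : h = invFourier (fun ω =>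
      Complex.exp (-(((ω ⬝ᵥ (S *ᵥ ω) + (Γ *ᵥ ω) ⬝ᵥ (Γ *ᵥ ω) : ℝ)) : ℂ)))) :
    0 ≤ c₀ ∧
    (∀ u : Fin 2 → ℝ, 0 < (h u).re ∧ (h u).im = 0) ∧
    (∀ u : Fin 2 → ℝ, ‖Δ u‖ = Real.exp (-c₀) * (h u).re) := by
  classical
  have hΓdet : IsUnit Γ.det := (Matrix.isUnit_iff_isUnit_det Γ).1 hΓ
  -- Γᵀ * Γ is positive definite
  have hΓΓ : (Γᵀ * Γ).PosDef := by
    refine Matrix.PosDef.of_dotProduct_mulVec_pos ?_ ?_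
    · ext i j
      simp only [Matrix.conjTranspose_apply, Matrix.mul_apply, Matrix.transpose_apply,
        star_trivial]
      exact Finset.sum_congr rfl fun k _ => mul_comm _ _
    · intro x hx
      have hx' : Γ *ᵥ x ≠ 0 := by
        intro h0
        apply hx
        have := congrArg (fun y => Γ⁻¹ *ᵥ y) h0
        simpa only [Matrix.mulVec_mulVec, Matrix.nonsing_inv_mul _ hΓdet,
          Matrix.one_mulVec, Matrix.mulVec_zero] using this
      have heq : star x ⬝ᵥ ((Γᵀ * Γ) *ᵥ x) = star (Γ *ᵥ x) ⬝ᵥ (Γ *ᵥ x) := by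
        rw [← Matrix.mulVec_mulVec, Matrix.dotProduct_mulVec, star_trivial,
          Matrix.vecMul_transpose, star_trivial]
      rw [heq]
      exact Matrix.dotProduct_star_self_pos_iff.2 hx'
  have hMpos : M.PosDef := by
    rw [hM]
    exact Matrix.PosDef.posSemidef_add hS' hΓΓ
  have hMdet : IsUnit M.det := hMpos.det_pos.ne'.isUnit
  have hMsymm : Mᵀ = M := by
    rw [hM, Matrix.transpose_add, Matrix.transpose_mul, Matrix.transpose_transpose, hS]
  have hMb : M *ᵥ btil = Γᵀ *ᵥ b := by
    rw [hbtil, Matrix.mulVec_mulVec, Matrix.mul_nonsing_inv _ hMdet, Matrix.one_mulVec]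
  -- auxiliary dot product identities
  have f1 : ∀ ω : Fin 2 → ℝ, ω ⬝ᵥ (M *ᵥ ω) = ω ⬝ᵥ (S *ᵥ ω) + (Γ *ᵥ ω) ⬝ᵥ (Γ *ᵥ ω) := by
    intro ω
    rw [hM, Matrix.add_mulVec, dotProduct_add]
    congr 1
    rw [← Matrix.mulVec_mulVec, Matrix.dotProduct_mulVec, Matrix.vecMul_transpose]
  have f2 : ∀ ω : Fin 2 → ℝ, ω ⬝ᵥ (M *ᵥ btil) = (Γ *ᵥ ω) ⬝ᵥ b := by
    intro ω
    rw [hMb, Matrix.dotProduct_mulVec, Matrix.vecMul_transpose]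
  have f3 : ∀ ω : Fin 2 → ℝ, btil ⬝ᵥ (M *ᵥ ω) = b ⬝ᵥ (Γ *ᵥ ω) := by
    intro ω
    rw [Matrix.dotProduct_mulVec, ← hMsymm, Matrix.vecMul_transpose, hMb,
      Matrix.mulVec_transpose, ← Matrix.dotProduct_mulVec]
  -- completing the square
  have hkey : ∀ ω : Fin 2 → ℝ,
      ω ⬝ᵥ (S *ᵥ ω) + (Γ *ᵥ ω - b) ⬝ᵥ (Γ *ᵥ ω - b)
        = (ω - btil) ⬝ᵥ (M *ᵥ (ω - btil)) + c₀ := by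
    intro ω
    have e1 : (Γ *ᵥ ω - b) ⬝ᵥ (Γ *ᵥ ω - b)
        = (Γ *ᵥ ω) ⬝ᵥ (Γ *ᵥ ω) - (Γ *ᵥ ω) ⬝ᵥ b - b ⬝ᵥ (Γ *ᵥ ω) + b ⬝ᵥ b := by
      rw [sub_dotProduct, dotProduct_sub, dotProduct_sub]
      ring
    have e2 : (ω - btil) ⬝ᵥ (M *ᵥ (ω - btil))
        = ω ⬝ᵥ (M *ᵥ ω) - ω ⬝ᵥ (M *ᵥ btil) - btil ⬝ᵥ (M *ᵥ ω) + btil ⬝ᵥ (M *ᵥ btil) := by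
      rw [Matrix.mulVec_sub, sub_dotProduct, dotProduct_sub,
        dotProduct_sub]
      ring
    rw [e1, e2, f1 ω, f2 ω, f3 ω, hc₀]
    ring
  -- nonnegativity of c₀
  have hc₀nn : 0 ≤ c₀ := by
    have hk := hkey btil
    rw [sub_self, zero_dotProduct, zero_add] at hk
    have h1 : 0 ≤ btil ⬝ᵥ (S *ᵥ btil) := by
      have := hS'.dotProduct_mulVec_nonneg btil
      rwa [star_trivial] at this
    have h2 : 0 ≤ (Γ *ᵥ btil - b) ⬝ᵥ (Γ *ᵥ btil - b) := dot_self_nonneg' _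
    linarith
  -- value of h
  have hhu : ∀ u : Fin 2 → ℝ, ∃ r : ℝ, 0 < r ∧
      h u = ((((2 * π) ^ 2)⁻¹ * r : ℝ) : ℂ) ∧
      (∫ ω : Fin 2 → ℝ,
        Complex.exp (-((ω ⬝ᵥ (M *ᵥ ω) : ℝ) : ℂ) + Complex.I * ((u ⬝ᵥ ω : ℝ) : ℂ))) = (r : ℂ) := by
    intro u
    obtain ⟨r, hr, hrint⟩ := gauss_aux M hMpos u
    refine ⟨r, hr, ?_, hrint⟩
    rw [hh, invFourier]
    have e0 : (∫ ω : Fin 2 → ℝ,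
        Complex.exp (-(((ω ⬝ᵥ (S *ᵥ ω) + (Γ *ᵥ ω) ⬝ᵥ (Γ *ᵥ ω) : ℝ)) : ℂ))
          * Complex.exp (Complex.I * ((u ⬝ᵥ ω : ℝ) : ℂ)))
        = ∫ ω : Fin 2 → ℝ,
            Complex.exp (-((ω ⬝ᵥ (M *ᵥ ω) : ℝ) : ℂ) + Complex.I * ((u ⬝ᵥ ω : ℝ) : ℂ)) := by
      congr 1
      funext ω
      rw [← Complex.exp_add, f1 ω]
    rw [e0, hrint]
    push_cast
    ring
  refine ⟨hc₀nn, ?_, ?_⟩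
  · intro u
    obtain ⟨r, hr, hval, -⟩ := hhu u
    constructor
    · rw [hval]
      simp only [Complex.ofReal_re]
      positivity
    · rw [hval]
      exact Complex.ofReal_im _
  · intro u
    obtain ⟨r, hr, hval, hrint⟩ := hhu u
    have hΔu : Δ u = (((2 * π) ^ 2 : ℝ)⁻¹ : ℂ)
        * (Complex.exp (-(c₀ : ℂ)) * (Complex.exp (Complex.I * ((u ⬝ᵥ btil : ℝ) : ℂ)) * r)) := by
      rw [hΔ, invFourier]
      congr 1
      have step1 : (∫ ω : Fin 2 → ℝ,
          Complex.exp (-(((ω ⬝ᵥ (S *ᵥ ω) + (Γ *ᵥ ω - b) ⬝ᵥ (Γ *ᵥ ω - b) : ℝ)) : ℂ))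
            * Complex.exp (Complex.I * ((u ⬝ᵥ ω : ℝ) : ℂ)))
          = ∫ ω : Fin 2 → ℝ, Complex.exp (-(c₀ : ℂ)) *
              Complex.exp (-(((ω - btil) ⬝ᵥ (M *ᵥ (ω - btil)) : ℝ) : ℂ)
                + Complex.I * ((u ⬝ᵥ ω : ℝ) : ℂ)) := by
        congr 1
        funext ω
        rw [← Complex.exp_add, ← Complex.exp_add, hkey ω]
        congr 1
        push_cast
        ring
      rw [step1, MeasureTheory.integral_const_mul]
      congr 1
      obtain ⟨G, hG⟩ : ∃ G : (Fin 2 → ℝ) → ℂ, G = fun v =>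
          Complex.exp (-((v ⬝ᵥ (M *ᵥ v) : ℝ) : ℂ)
            + Complex.I * ((u ⬝ᵥ (v + btil) : ℝ) : ℂ)) := ⟨_, rfl⟩
      have step2 : (∫ ω : Fin 2 → ℝ,
          Complex.exp (-(((ω - btil) ⬝ᵥ (M *ᵥ (ω - btil)) : ℝ) : ℂ)
            + Complex.I * ((u ⬝ᵥ ω : ℝ) : ℂ)))
          = ∫ ω : Fin 2 → ℝ, G (ω - btil) := by
        rw [hG]
        congr 1
        funext ω
        simp [sub_add_cancel]
      rw [step2, MeasureTheory.integral_sub_right_eq_self G btil]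
      have step3 : (∫ v : Fin 2 → ℝ, G v)
          = Complex.exp (Complex.I * ((u ⬝ᵥ btil : ℝ) : ℂ))
            * ∫ v : Fin 2 → ℝ,
                Complex.exp (-((v ⬝ᵥ (M *ᵥ v) : ℝ) : ℂ) + Complex.I * ((u ⬝ᵥ v : ℝ) : ℂ)) := by
        rw [← MeasureTheory.integral_const_mul]
        simp only [hG]
        congr 1
        funext v
        rw [← Complex.exp_add, dotProduct_add]
        congr 1
        push_cast
        ring
      rw [step3, hrint]
    rw [hΔu, hval]
    rw [norm_mul, norm_mul, norm_mul]
    have n1 : ‖(((2 * π) ^ 2 : ℝ)⁻¹ : ℂ)‖ = ((2 * π) ^ 2 : ℝ)⁻¹ := by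
      rw [norm_inv, Complex.norm_real, Real.norm_eq_abs, _root_.abs_of_nonneg (by positivity)]
    have n2 : ‖Complex.exp (-(c₀ : ℂ))‖ = Real.exp (-c₀) := by
      rw [Complex.norm_exp]
      norm_num
    have n3 : ‖Complex.exp (Complex.I * ((u ⬝ᵥ btil : ℝ) : ℂ))‖ = 1 := by
      rw [Complex.norm_exp]
      simp [Complex.mul_re]
    have n4 : ‖(r : ℂ)‖ = r := by
      rw [Complex.norm_real, Real.norm_eq_abs, _root_.abs_of_pos hr]
    rw [n1, n2, n3, n4]
    simp only [Complex.ofReal_re]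
    ring
end

section
/- (Proposition 2.) Let Σ be a real symmetric positive definite 2×2 matrix, Γ an invertible real 2×2 matrix, and b ∈ ℝ². Let x_Σ be the inverse Fourier transform of ω ↦ exp(−ωᵀΣω) and let ψ be the inverse Fourier transform of ω ↦ exp(−‖Γω − b‖²) (both spectra are integrable, so x_Σ and ψ are well-defined continuous integrable functions, with x_Σ real-valued). Then there exists a constant c > 0 such that for every u ∈ ℝ², |(x_Σ ⋆ ψ)(u)| = c · (x_Σ ⋆ |ψ|)(u), where |ψ| denotes the pointwise complex modulus of ψ. -/
open Matrix MeasureTheory Complex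
open scoped Real

/-! ### Auxiliary Gaussian integral lemmas -/

lemma int1D (w : ℂ) : ∫ x : ℝ, cexp (-(x:ℂ)^2 + w*x) = (π:ℂ)^(1/2:ℂ) * cexp (w^2/4) := by
  have h := integral_cexp_quadratic (b := -1) (by norm_num) w 0
  simp only [show ∀ x:ℝ, -(x:ℂ)^2 + w*x = (-1)*(x:ℂ)^2 + w*x + 0 by intro x; ring] at h ⊢
  rw [h]
  norm_num
  congr 1; ring

lemma intStd (w : Fin 2 → ℂ) :
    ∫ η : Fin 2 → ℝ, cexp (∑ k, (-(η k:ℂ)^2 + w k * η k)) = (π:ℂ) * cexp (∑ k, (w k)^2/4) := by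
  simp_rw [Complex.exp_sum]
  rw [MeasureTheory.integral_fintype_prod_volume_eq_prod (f := fun k (x:ℝ) => cexp (-(x:ℂ)^2 + w k * x))]
  simp_rw [int1D]
  rw [Finset.prod_mul_distrib, ← Complex.exp_sum, Finset.prod_const]
  congr 1
  have h0 : (π:ℂ) ≠ 0 := by simp [Real.pi_ne_zero]
  rw [Finset.card_univ, Fintype.card_fin, pow_two, ← Complex.cpow_add _ _ h0]
  norm_num

lemma intCoV (A : Matrix (Fin 2) (Fin 2) ℝ) (hA : IsUnit A.det) (f : (Fin 2 → ℝ) → ℂ)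
    (hf : Continuous f) :
    ∫ v, f (A *ᵥ v) = |A.det|⁻¹ • ∫ v, f v := by
  have hd : A.det ≠ 0 := hA.ne_zero
  have hmap := Real.map_matrix_volume_pi_eq_smul_volume_pi (M := A) hd
  have hmeas : Measurable (Matrix.toLin' A) :=
    (Matrix.toLin' A).continuous_of_finiteDimensional.measurable
  calc ∫ v, f (A *ᵥ v) = ∫ v, f (Matrix.toLin' A v) := by simp [Matrix.toLin'_apply]
    _ = ∫ y, f y ∂(Measure.map (Matrix.toLin' A) volume) := by
        rw [MeasureTheory.integral_map hmeas.aemeasurable hf.aestronglyMeasurable]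
    _ = |A.det|⁻¹ • ∫ v, f v := by
        rw [hmap, integral_smul_measure, ENNReal.toReal_ofReal (by positivity), abs_inv]

lemma intGen (A : Matrix (Fin 2) (Fin 2) ℝ) (hA : IsUnit A.det) (z : Fin 2 → ℂ) :
    ∫ v : Fin 2 → ℝ, cexp (-(((A *ᵥ v) ⬝ᵥ (A *ᵥ v) : ℝ) : ℂ) + ∑ j, z j * (v j : ℂ)) =
      ((|A.det|⁻¹ * π : ℝ) : ℂ) * cexp (∑ k, (∑ j, z j * ((A⁻¹ j k : ℝ) : ℂ))^2 / 4) := by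
  have hd : A.det ≠ 0 := hA.ne_zero
  set w : Fin 2 → ℂ := fun k => ∑ j, z j * ((A⁻¹ j k : ℝ) : ℂ) with hw
  have hco : Continuous fun η : Fin 2 → ℝ => cexp (∑ k, (-(η k:ℂ)^2 + w k * η k)) := by
    apply Complex.continuous_exp.comp
    exact continuous_finset_sum _ fun k _ => by fun_prop
  have key : ∀ v : Fin 2 → ℝ,
      cexp (-(((A *ᵥ v) ⬝ᵥ (A *ᵥ v) : ℝ) : ℂ) + ∑ j, z j * (v j : ℂ)) =
      cexp (∑ k, (-(((A *ᵥ v) k : ℝ):ℂ)^2 + w k * ((A *ᵥ v) k : ℝ))) := by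
    intro v
    congr 1
    have hv : A⁻¹ *ᵥ (A *ᵥ v) = v := by
      rw [Matrix.mulVec_mulVec, Matrix.nonsing_inv_mul A hA, Matrix.one_mulVec]
    have h2 : ∑ k, w k * ((A *ᵥ v) k : ℂ) = ∑ j, z j * (v j : ℂ) := by
      calc ∑ k, w k * ((A *ᵥ v) k : ℂ)
          = ∑ k, ∑ j, z j * (((A⁻¹ j k : ℝ):ℂ) * ((A *ᵥ v) k : ℂ)) := by
            simp only [hw, Fin.sum_univ_two]; ring
        _ = ∑ j, z j * (((A⁻¹ *ᵥ (A *ᵥ v)) j : ℝ) : ℂ) := by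
            rw [Finset.sum_comm]
            refine Finset.sum_congr rfl fun j _ => ?_
            simp only [Matrix.mulVec, dotProduct, Fin.sum_univ_two]
            push_cast
            ring
        _ = ∑ j, z j * (v j : ℂ) := by rw [hv]
    rw [Finset.sum_add_distrib, h2]
    congr 1
    simp only [dotProduct, Fin.sum_univ_two]
    push_cast
    ring
  simp_rw [key]
  have hc2 := intCoV A hA (fun η => cexp (∑ k, (-(η k:ℂ)^2 + w k * η k))) hco
  rw [hc2, intStd, Complex.real_smul]
  push_cast
  ring

open scoped MatrixOrder in
/-- Existence of a symmetric invertible square root of a positive definite matrix. -/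
lemma existsSqrt {C : Matrix (Fin 2) (Fin 2) ℝ} (hC : C.PosDef) :
    ∃ Q : Matrix (Fin 2) (Fin 2) ℝ, Q * Q = C ∧ Qᵀ = Q ∧ IsUnit Q.det := by
  refine ⟨CFC.sqrt C, CFC.sqrt_mul_sqrt_self C hC.posSemidef.nonneg, ?_, ?_⟩
  · have h := (CFC.sqrt_nonneg C).posSemidef.1
    rw [Matrix.IsHermitian, Matrix.conjTranspose_eq_transpose_of_trivial] at h
    exact h
  · rw [isUnit_iff_ne_zero]
    intro h
    have h2 : (CFC.sqrt C * CFC.sqrt C).det = C.det := by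
      rw [CFC.sqrt_mul_sqrt_self C hC.posSemidef.nonneg]
    rw [Matrix.det_mul, h, mul_zero] at h2
    exact hC.det_pos.ne h2

/-- Squared symmetric matrix quadratic form. -/
lemma quadPP (P : Matrix (Fin 2) (Fin 2) ℝ) (hPt : Pᵀ = P) (ω : Fin 2 → ℝ) :
    ω ⬝ᵥ ((P * P) *ᵥ ω) = (P *ᵥ ω) ⬝ᵥ (P *ᵥ ω) := by
  have h01 : P 0 1 = P 1 0 := by
    conv_lhs => rw [← hPt, Matrix.transpose_apply]
  simp only [Matrix.mul_apply, Matrix.mulVec, dotProduct, Fin.sum_univ_two, h01]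
  ring

lemma quadBBt (B : Matrix (Fin 2) (Fin 2) ℝ) (v : Fin 2 → ℝ) :
    v ⬝ᵥ (((4:ℝ)⁻¹ • (B * Bᵀ)) *ᵥ v) = ((v ᵥ* B) ⬝ᵥ (v ᵥ* B))/4 := by
  simp only [Matrix.mul_apply, Matrix.mulVec, Matrix.vecMul, dotProduct, Fin.sum_univ_two,
    Matrix.smul_apply, Matrix.transpose_apply, smul_eq_mul]
  ring

lemma crossBBt (B : Matrix (Fin 2) (Fin 2) ℝ) (u v : Fin 2 → ℝ) :
    (u - v) ⬝ᵥ (((4:ℝ)⁻¹ • (B * Bᵀ)) *ᵥ (u - v)) =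
      u ⬝ᵥ (((4:ℝ)⁻¹ • (B * Bᵀ)) *ᵥ u) - 2*((((4:ℝ)⁻¹ • (B * Bᵀ)) *ᵥ u) ⬝ᵥ v)
        + v ⬝ᵥ (((4:ℝ)⁻¹ • (B * Bᵀ)) *ᵥ v) := by
  simp only [Matrix.mul_apply, Matrix.mulVec, Matrix.vecMul, dotProduct, Fin.sum_univ_two,
    Matrix.smul_apply, Matrix.transpose_apply, smul_eq_mul, Pi.sub_apply]
  ring

/-- Simplification of the exponent produced by `intGen` for `z j = p j + I * q j`. -/
lemma wSimp (p q : Fin 2 → ℝ) (B : Matrix (Fin 2) (Fin 2) ℝ) :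
    ∑ k : Fin 2, (∑ j : Fin 2, (((p j : ℝ):ℂ) + Complex.I * ((q j : ℝ):ℂ)) * ((B j k : ℝ):ℂ))^2 / 4
      = ((((p ᵥ* B) ⬝ᵥ (p ᵥ* B) - (q ᵥ* B) ⬝ᵥ (q ᵥ* B))/4 : ℝ) : ℂ)
        + Complex.I * ((((p ᵥ* B) ⬝ᵥ (q ᵥ* B))/2 : ℝ) : ℂ) := by
  simp only [Matrix.vecMul, dotProduct, Fin.sum_univ_two]
  push_cast
  linear_combination ((((q 0 : ℝ):ℂ) * ((B 0 0 : ℝ):ℂ) + ((q 1 : ℝ):ℂ) * ((B 1 0 : ℝ):ℂ))^2/4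
    + (((q 0 : ℝ):ℂ) * ((B 0 1 : ℝ):ℂ) + ((q 1 : ℝ):ℂ) * ((B 1 1 : ℝ):ℂ))^2/4) * Complex.I_sq
/-- **Proposition 2.** Let `S` be symmetric positive definite, `Γ` invertible
and `b ∈ ℝ²`. Let `xS` be the inverse Fourier transform of `ω ↦ exp(-ωᵀSω)` (a Gaussian blob)
and `ψ` that of `ω ↦ exp(-‖Γω - b‖²)` (a Gábor-type filter). Then there is a constant `c > 0`
such that `|(xS ⋆ ψ)(u)| = c · (xS ⋆ |ψ|)(u)` for every `u`, where
`(f ⋆ g)(u) = ∫ f(v) g(u-v) dv` and `|ψ|` is the pointwise complex modulus of `ψ`. -/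
theorem stmt12 (S Γ : Matrix (Fin 2) (Fin 2) ℝ)
    (hS : S.IsSymm) (hS' : S.PosDef) (hΓ : IsUnit Γ) (b : Fin 2 → ℝ)
    (xS ψ : (Fin 2 → ℝ) → ℂ)
    (hxS : xS = invFourier (fun ω => Complex.exp (-((ω ⬝ᵥ (S *ᵥ ω) : ℝ) : ℂ))))
    (hψ : ψ = invFourier (fun ω =>
      Complex.exp (-(((Γ *ᵥ ω - b) ⬝ᵥ (Γ *ᵥ ω - b) : ℝ) : ℂ)))) :
    ∃ c : ℝ, 0 < c ∧ ∀ u : Fin 2 → ℝ,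
      ((‖∫ v : Fin 2 → ℝ, xS v * ψ (u - v)‖ : ℝ) : ℂ) =
        (c : ℂ) * ∫ v : Fin 2 → ℝ, xS v * ((‖ψ (u - v)‖ : ℝ) : ℂ) := by
  have hΓd : IsUnit Γ.det := (Matrix.isUnit_iff_isUnit_det Γ).mp hΓ
  obtain ⟨P, hPP, hPt, hPd⟩ := existsSqrt hS'
  set U : Matrix (Fin 2) (Fin 2) ℝ := (4:ℝ)⁻¹ • (P⁻¹ * P⁻¹ᵀ) with hU
  set V : Matrix (Fin 2) (Fin 2) ℝ := (4:ℝ)⁻¹ • (Γ⁻¹ * Γ⁻¹ᵀ) with hV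
  set a : Fin 2 → ℝ := Γ⁻¹ *ᵥ b with ha
  set kx : ℝ := ((2*π)^2)⁻¹ * (|P.det|⁻¹ * π) with hkx
  set kp : ℝ := ((2*π)^2)⁻¹ * (|Γ.det|⁻¹ * π) with hkp
  have hπ : (0:ℝ) < π := Real.pi_pos
  have hkxpos : 0 < kx := by
    rw [hkx]
    exact mul_pos (inv_pos.mpr (by positivity)) (mul_pos (inv_pos.mpr (abs_pos.mpr hPd.ne_zero)) hπ)
  have hkppos : 0 < kp := by
    rw [hkp]
    exact mul_pos (inv_pos.mpr (by positivity)) (mul_pos (inv_pos.mpr (abs_pos.mpr hΓd.ne_zero)) hπ)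
  -- closed form for xS
  have hxSform : ∀ v0 : Fin 2 → ℝ, xS v0 = (kx:ℂ) * cexp (-((v0 ⬝ᵥ (U *ᵥ v0) : ℝ) : ℂ)) := by
    intro v0
    rw [hxS]
    simp only [invFourier]
    have he : (fun ω : Fin 2 → ℝ => cexp (-((ω ⬝ᵥ (S *ᵥ ω) : ℝ):ℂ)) * cexp (Complex.I * ((v0 ⬝ᵥ ω : ℝ):ℂ)))
        = fun ω : Fin 2 → ℝ => cexp (-(((P *ᵥ ω) ⬝ᵥ (P *ᵥ ω) : ℝ):ℂ)
            + ∑ j, ((((0:Fin 2 → ℝ) j : ℝ):ℂ) + Complex.I * ((v0 j : ℝ):ℂ)) * ((ω j : ℝ):ℂ)) := by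
      funext ω
      rw [← Complex.exp_add]
      congr 1
      have hq : ω ⬝ᵥ (S *ᵥ ω) = (P *ᵥ ω) ⬝ᵥ (P *ᵥ ω) := by rw [← hPP]; exact quadPP P hPt ω
      rw [hq]
      simp only [dotProduct, Fin.sum_univ_two, Pi.zero_apply]
      push_cast
      ring
    rw [he, intGen P hPd (fun j => (((0:Fin 2 → ℝ) j : ℝ):ℂ) + Complex.I * ((v0 j : ℝ):ℂ)),
      wSimp 0 v0 P⁻¹]
    have h0 : (0:Fin 2 → ℝ) ᵥ* P⁻¹ = 0 := Matrix.zero_vecMul _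
    have hq2 : v0 ⬝ᵥ (U *ᵥ v0) = ((v0 ᵥ* P⁻¹) ⬝ᵥ (v0 ᵥ* P⁻¹))/4 := by
      rw [hU]; exact quadBBt P⁻¹ v0
    rw [h0]
    have hE : ((((0:Fin 2 → ℝ) ⬝ᵥ (0:Fin 2 → ℝ) - (v0 ᵥ* P⁻¹) ⬝ᵥ (v0 ᵥ* P⁻¹))/4 : ℝ) : ℂ)
        + Complex.I * ((((0:Fin 2 → ℝ) ⬝ᵥ (v0 ᵥ* P⁻¹))/2 : ℝ) : ℂ)
        = -((v0 ⬝ᵥ (U *ᵥ v0) : ℝ) : ℂ) := by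
      rw [hq2]
      simp only [zero_dotProduct]
      push_cast
      ring
    rw [hE, hkx]
    push_cast
    ring
  -- closed form for ψ
  have hψform : ∀ w0 : Fin 2 → ℝ, ψ w0 = (kp:ℂ) *
      cexp (-((w0 ⬝ᵥ (V *ᵥ w0) : ℝ):ℂ) + Complex.I * ((a ⬝ᵥ w0 : ℝ):ℂ)) := by
    intro w0
    rw [hψ]
    simp only [invFourier]
    have he : (fun ω : Fin 2 → ℝ => cexp (-(((Γ *ᵥ ω - b) ⬝ᵥ (Γ *ᵥ ω - b) : ℝ):ℂ))
          * cexp (Complex.I * ((w0 ⬝ᵥ ω : ℝ):ℂ)))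
        = fun ω : Fin 2 → ℝ => cexp (-((b ⬝ᵥ b : ℝ):ℂ)) * cexp (-(((Γ *ᵥ ω) ⬝ᵥ (Γ *ᵥ ω) : ℝ):ℂ)
            + ∑ j, (((((2:ℝ) • (b ᵥ* Γ)) j : ℝ):ℂ) + Complex.I * ((w0 j : ℝ):ℂ)) * ((ω j : ℝ):ℂ)) := by
      funext ω
      rw [← Complex.exp_add, ← Complex.exp_add]
      congr 1
      simp only [dotProduct, Matrix.mulVec, Matrix.vecMul, Fin.sum_univ_two, Pi.sub_apply,
        Pi.smul_apply, smul_eq_mul]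
      push_cast
      ring
    rw [he, MeasureTheory.integral_const_mul,
      intGen Γ hΓd (fun j => ((((2:ℝ) • (b ᵥ* Γ)) j : ℝ):ℂ) + Complex.I * ((w0 j : ℝ):ℂ)),
      wSimp ((2:ℝ) • (b ᵥ* Γ)) w0 Γ⁻¹]
    have h1 : ((2:ℝ) • (b ᵥ* Γ)) ᵥ* Γ⁻¹ = (2:ℝ) • b := by
      rw [Matrix.smul_vecMul, Matrix.vecMul_vecMul, Matrix.mul_nonsing_inv Γ hΓd,
        Matrix.vecMul_one]
    rw [h1]
    have hq2 : w0 ⬝ᵥ (V *ᵥ w0) = ((w0 ᵥ* Γ⁻¹) ⬝ᵥ (w0 ᵥ* Γ⁻¹))/4 := by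
      rw [hV]; exact quadBBt Γ⁻¹ w0
    have hha : b ⬝ᵥ (w0 ᵥ* Γ⁻¹) = a ⬝ᵥ w0 := by
      rw [ha]
      simp only [dotProduct, Matrix.mulVec, Matrix.vecMul, Fin.sum_univ_two]
      ring
    have hE : (-((b ⬝ᵥ b : ℝ):ℂ)) + (((((2:ℝ) • b) ⬝ᵥ ((2:ℝ) • b)
            - (w0 ᵥ* Γ⁻¹) ⬝ᵥ (w0 ᵥ* Γ⁻¹))/4 : ℝ):ℂ)
          + Complex.I * (((((2:ℝ) • b) ⬝ᵥ (w0 ᵥ* Γ⁻¹))/2 : ℝ):ℂ)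
        = -((w0 ⬝ᵥ (V *ᵥ w0) : ℝ):ℂ) + Complex.I * ((a ⬝ᵥ w0 : ℝ):ℂ) := by
      rw [hq2, ← hha]
      simp only [dotProduct, Fin.sum_univ_two, Pi.smul_apply, smul_eq_mul]
      push_cast
      ring
    rw [hkp, ← hE]
    push_cast
    simp only [Complex.exp_add]
    ring
  have hψnorm : ∀ w0 : Fin 2 → ℝ, ((‖ψ w0‖ : ℝ):ℂ) = (kp:ℂ) *
      cexp (-((w0 ⬝ᵥ (V *ᵥ w0) : ℝ):ℂ)) := by
    intro w0
    rw [hψform w0, norm_mul]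
    have h1 : ‖((kp:ℝ):ℂ)‖ = kp := by
      simp [abs_of_pos hkppos]
    have h2 : ‖cexp (-((w0 ⬝ᵥ (V *ᵥ w0) : ℝ):ℂ) + Complex.I * ((a ⬝ᵥ w0 : ℝ):ℂ))‖
        = Real.exp (-(w0 ⬝ᵥ (V *ᵥ w0))) := by
      rw [Complex.norm_exp]
      congr 1
      simp
    rw [h1, h2]
    push_cast
    ring
  -- positive definiteness of U + V, and its square root Q
  have hCpd : (U + V).PosDef := by
    refine Matrix.PosDef.of_dotProduct_mulVec_pos ?_ ?_
    · rw [Matrix.IsHermitian, Matrix.conjTranspose_eq_transpose_of_trivial, Matrix.transpose_add,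
        hU, hV, Matrix.transpose_smul, Matrix.transpose_smul, Matrix.transpose_mul,
        Matrix.transpose_transpose, Matrix.transpose_mul, Matrix.transpose_transpose]
    · intro x hx
      rw [star_trivial, Matrix.add_mulVec, dotProduct_add, hU, hV, quadBBt, quadBBt]
      have h2 : x ᵥ* Γ⁻¹ ≠ 0 := by
        intro h
        apply hx
        have h3 := congrArg (fun y => y ᵥ* Γ) h
        simpa [Matrix.vecMul_vecMul, Matrix.nonsing_inv_mul Γ hΓd, Matrix.vecMul_one,
          Matrix.zero_vecMul] using h3
      have h0 : (0:ℝ) ≤ (x ᵥ* Γ⁻¹) ⬝ᵥ (x ᵥ* Γ⁻¹) := by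
        simp only [dotProduct, Fin.sum_univ_two]
        exact add_nonneg (mul_self_nonneg _) (mul_self_nonneg _)
      have h3 : 0 < (x ᵥ* Γ⁻¹) ⬝ᵥ (x ᵥ* Γ⁻¹) :=
        h0.lt_of_ne fun h => h2 (dotProduct_self_eq_zero.mp h.symm)
      have h4 : (0:ℝ) ≤ (x ᵥ* P⁻¹) ⬝ᵥ (x ᵥ* P⁻¹) := by
        simp only [dotProduct, Fin.sum_univ_two]
        exact add_nonneg (mul_self_nonneg _) (mul_self_nonneg _)
      linarith
  obtain ⟨Q, hQQ, hQt, hQd⟩ := existsSqrt hCpd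
  have hk3pos : (0:ℝ) < |Q.det|⁻¹ * π :=
    mul_pos (inv_pos.mpr (abs_pos.mpr hQd.ne_zero)) hπ
  -- the central convolution computation
  have key : ∀ (q : Fin 2 → ℝ) (u : Fin 2 → ℝ),
      (∫ v : Fin 2 → ℝ, ((kx:ℂ) * cexp (-((v ⬝ᵥ (U *ᵥ v) : ℝ):ℂ)))
        * ((kp:ℂ) * cexp (-(((u - v) ⬝ᵥ (V *ᵥ (u - v)) : ℝ):ℂ)
            + Complex.I * ((q ⬝ᵥ (u - v) : ℝ):ℂ))))
      = (kx:ℂ) * (kp:ℂ) * cexp (-((u ⬝ᵥ (V *ᵥ u) : ℝ):ℂ) + Complex.I * ((q ⬝ᵥ u : ℝ):ℂ))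
        * (((|Q.det|⁻¹ * π : ℝ)):ℂ)
        * cexp ((((((fun j => 2*((V *ᵥ u) j)) ᵥ* Q⁻¹) ⬝ᵥ ((fun j => 2*((V *ᵥ u) j)) ᵥ* Q⁻¹)
            - ((fun j => -(q j)) ᵥ* Q⁻¹) ⬝ᵥ ((fun j => -(q j)) ᵥ* Q⁻¹))/4 : ℝ):ℂ)
          + Complex.I * (((((fun j => 2*((V *ᵥ u) j)) ᵥ* Q⁻¹) ⬝ᵥ ((fun j => -(q j)) ᵥ* Q⁻¹))/2 : ℝ):ℂ)) := by
    intro q u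
    have hQuad : ∀ v : Fin 2 → ℝ, (Q *ᵥ v) ⬝ᵥ (Q *ᵥ v) = v ⬝ᵥ (U *ᵥ v) + v ⬝ᵥ (V *ᵥ v) := by
      intro v
      rw [← quadPP Q hQt v, hQQ, Matrix.add_mulVec, dotProduct_add]
    have hCross : ∀ v : Fin 2 → ℝ,
        (u - v) ⬝ᵥ (V *ᵥ (u - v)) = u ⬝ᵥ (V *ᵥ u) - 2*((V *ᵥ u) ⬝ᵥ v) + v ⬝ᵥ (V *ᵥ v) := by
      intro v
      rw [hV]; exact crossBBt Γ⁻¹ u v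
    have he : (fun v : Fin 2 → ℝ => ((kx:ℂ) * cexp (-((v ⬝ᵥ (U *ᵥ v) : ℝ):ℂ)))
          * ((kp:ℂ) * cexp (-(((u - v) ⬝ᵥ (V *ᵥ (u - v)) : ℝ):ℂ)
            + Complex.I * ((q ⬝ᵥ (u - v) : ℝ):ℂ))))
        = fun v : Fin 2 → ℝ => ((kx:ℂ) * (kp:ℂ)
            * cexp (-((u ⬝ᵥ (V *ᵥ u) : ℝ):ℂ) + Complex.I * ((q ⬝ᵥ u : ℝ):ℂ)))
          * cexp (-(((Q *ᵥ v) ⬝ᵥ (Q *ᵥ v) : ℝ):ℂ)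
            + ∑ j, (((2*((V *ᵥ u) j) : ℝ):ℂ) + Complex.I * ((-(q j) : ℝ):ℂ)) * ((v j : ℝ):ℂ)) := by
      funext v
      have hEE : (-((v ⬝ᵥ (U *ᵥ v) : ℝ):ℂ)) + (-((((u - v) ⬝ᵥ (V *ᵥ (u - v))) : ℝ):ℂ)
            + Complex.I * ((q ⬝ᵥ (u - v) : ℝ):ℂ))
          = (-((u ⬝ᵥ (V *ᵥ u) : ℝ):ℂ) + Complex.I * ((q ⬝ᵥ u : ℝ):ℂ))
            + (-(((Q *ᵥ v) ⬝ᵥ (Q *ᵥ v) : ℝ):ℂ)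
              + ∑ j, (((2*((V *ᵥ u) j) : ℝ):ℂ) + Complex.I * ((-(q j) : ℝ):ℂ)) * ((v j : ℝ):ℂ)) := by
        rw [hQuad v, hCross v]
        simp only [dotProduct, Fin.sum_univ_two, Pi.sub_apply]
        push_cast
        ring
      calc ((kx:ℂ) * cexp (-((v ⬝ᵥ (U *ᵥ v) : ℝ):ℂ)))
            * ((kp:ℂ) * cexp (-(((u - v) ⬝ᵥ (V *ᵥ (u - v)) : ℝ):ℂ)
              + Complex.I * ((q ⬝ᵥ (u - v) : ℝ):ℂ)))
          = ((kx:ℂ) * (kp:ℂ)) * cexp ((-((v ⬝ᵥ (U *ᵥ v) : ℝ):ℂ))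
              + (-((((u - v) ⬝ᵥ (V *ᵥ (u - v))) : ℝ):ℂ)
                + Complex.I * ((q ⬝ᵥ (u - v) : ℝ):ℂ))) := by
            simp only [Complex.exp_add]; ring
        _ = _ := by rw [hEE]; simp only [Complex.exp_add]; ring
    rw [he, MeasureTheory.integral_const_mul, intGen Q hQd,
      wSimp (fun j => 2*((V *ᵥ u) j)) (fun j => -(q j)) Q⁻¹]
    ring
  refine ⟨Real.exp (-((a ᵥ* Q⁻¹) ⬝ᵥ (a ᵥ* Q⁻¹))/4), Real.exp_pos _, fun u => ?_⟩
  have hz : ∀ w0 : Fin 2 → ℝ, (kp:ℂ) * cexp (-((w0 ⬝ᵥ (V *ᵥ w0) : ℝ):ℂ))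
      = (kp:ℂ) * cexp (-((w0 ⬝ᵥ (V *ᵥ w0) : ℝ):ℂ)
        + Complex.I * (((0:Fin 2 → ℝ) ⬝ᵥ w0 : ℝ):ℂ)) := by
    intro w0
    simp
  simp only [hψnorm]
  simp only [hxSform, hψform]
  simp only [hz]
  rw [key a u, key 0 u]
  have hm0 : ((fun j => -((0:Fin 2 → ℝ) j)) ᵥ* Q⁻¹) = 0 := by
    have h : (fun j => -((0:Fin 2 → ℝ) j)) = (0:Fin 2 → ℝ) := by funext j; simp
    rw [h, Matrix.zero_vecMul]
  have hma : ((fun j => -(a j)) ᵥ* Q⁻¹) = -(a ᵥ* Q⁻¹) := by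
    have h : (fun j => -(a j)) = -a := rfl
    rw [h, Matrix.neg_vecMul]
  rw [hm0, hma]
  simp only [dotProduct_zero, zero_dotProduct, dotProduct_neg,
    neg_dotProduct, neg_neg, sub_zero, Complex.ofReal_zero, mul_zero, zero_mul,
    add_zero, zero_div]
  set X : ℝ := (fun j => 2 * (V *ᵥ u) j) ᵥ* Q⁻¹ ⬝ᵥ (fun j => 2 * (V *ᵥ u) j) ᵥ* Q⁻¹ with hX
  set Y : ℝ := a ᵥ* Q⁻¹ ⬝ᵥ a ᵥ* Q⁻¹ with hY
  set Z : ℝ := (fun j => 2 * (V *ᵥ u) j) ᵥ* Q⁻¹ ⬝ᵥ a ᵥ* Q⁻¹ with hZ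
  have hnorm : ‖(kx:ℂ) * kp * cexp (-((u ⬝ᵥ (V *ᵥ u) : ℝ):ℂ) + Complex.I * ((a ⬝ᵥ u : ℝ):ℂ))
        * (((|Q.det|⁻¹ * π : ℝ)):ℂ) * cexp ((((X - Y)/4 : ℝ):ℂ) + Complex.I * ((-Z/2 : ℝ):ℂ))‖
      = kx * kp * Real.exp (-(u ⬝ᵥ (V *ᵥ u))) * (|Q.det|⁻¹ * π) * Real.exp ((X - Y)/4) := by
    simp only [norm_mul, Complex.norm_real, Real.norm_eq_abs, Complex.norm_exp,
      Complex.add_re, Complex.neg_re, Complex.ofReal_re, Complex.mul_re, Complex.I_re,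
      Complex.I_im, Complex.ofReal_im, mul_zero, zero_mul, zero_sub, sub_zero, one_mul,
      mul_one, neg_zero, add_zero, zero_add, neg_neg]
    rw [abs_of_pos hkxpos, abs_of_pos hkppos, ← abs_mul, abs_of_pos hk3pos]
  rw [hnorm, show (X - Y)/4 = -Y/4 + X/4 from by ring, Real.exp_add]
  simp only [← Complex.ofReal_neg, ← Complex.ofReal_exp]
  push_cast
  ring
end
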